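/- Existence of the HIV-only endemic equilibrium of the full model (part of Theorem 5.3): suppose R0H = Λ·λσ/(N·d·(r2+d+dH)) > 1. Let S̃ = N·(r2+d+dH)/(λσ), H̃ = Λ/(r2+d+dH) − d·N/(λσ), and H̃T = r2·H̃/(d+dH). Then the twelve-dimensional point E_H = (S̃, 0, 0, H̃, 0, 0, 0, 0, 0, 0, H̃T, 0) makes all twelve right-hand sides of the full HIV–TB model (with N held as the fixed positive constant) vanish, and S̃, H̃, H̃T are all strictly positive. -/

import Mathlib

/-- Existence of the HIV-only endemic equilibrium of the full model (part of Theorem 5.3):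
if `R0H > 1`, the point `E_H = (S̃, 0, 0, H̃, 0, 0, 0, 0, 0, 0, H̃T, 0)` makes all twelve
right-hand sides of the full HIV–TB model vanish, and `S̃, H̃, H̃T > 0`. -/
theorem full_HIV_endemic_equilibrium
    (Lam d dT dH dHT k1 k2 r r1 r2 r3 p1 p2 e1 e2 g be ls Nv : ℝ)
    (hLam : 0 < Lam) (hd : 0 < d) (hdT : 0 < dT) (hdH : 0 < dH) (hdHT : 0 < dHT)
    (hk1 : 0 < k1) (hk2 : 0 < k2) (hr : 0 < r) (hr1 : 0 < r1) (hr2 : 0 < r2)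
    (hr3 : 0 < r3) (hp1 : 0 < p1) (hp2 : 0 < p2) (he1 : 0 < e1) (he2 : 0 < e2)
    (hg : 0 < g) (hbe : 0 < be) (hls : 0 < ls) (hNv : 0 < Nv)
    (al : ℝ) (hal : al = g * p1 / (p1 + p2))
    (hR : 1 < Lam * ls / (Nv * d * (r2 + d + dH)))
    (St Ht HtT : ℝ)
    (hSt : St = Nv * (r2 + d + dH) / ls)
    (hHt : Ht = Lam / (r2 + d + dH) - d * Nv / ls)
    (hHtT : HtT = r2 * Ht / (d + dH)) :
    (0 < St ∧ 0 < Ht ∧ 0 < HtT) ∧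
    -- the twelve right-hand sides of the full model, evaluated at
    -- (St, 0, 0, Ht, 0, 0, 0, 0, 0, 0, HtT, 0), all vanish:
    (Lam - be * St * (0 + 0) / Nv - d * St
        - ls * St * (Ht + 0 + 0 + 0 + 0) / Nv + r1 * 0 = 0) ∧
    (be * St * (0 + 0) / Nv - (d + k1) * 0
        - ls * 0 * (Ht + 0 + 0 + 0 + 0) / Nv = 0) ∧
    (k1 * 0 - (d + dT + r) * 0 - ls * 0 * (Ht + 0 + 0 + 0 + 0) / Nv = 0) ∧
    (ls * St * (Ht + 0 + 0 + 0 + 0) / Nv - (r2 + d + dH) * Ht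
        - be * Ht * (0 + 0) / Nv + p2 * 0 = 0) ∧
    (ls * 0 * (Ht + 0 + 0 + 0 + 0) / Nv + be * Ht * (0 + 0) / Nv
        - (k2 + d + dH) * 0 = 0) ∧
    (k2 * 0 + ls * 0 * (Ht + 0 + 0 + 0 + 0) / Nv - (d + dT + dH + r3) * 0 = 0) ∧
    (r3 * 0 - (p1 + d + dH + e1) * 0 = 0) ∧
    (p1 * 0 - (p2 + d + dH + e2) * 0 = 0) ∧
    (e1 * 0 - (p1 + d + dH + g * dHT) * 0 = 0) ∧
    (e2 * 0 + p1 * 0 - (d + dH + al * dHT) * 0 = 0) ∧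
    (p2 * 0 + r2 * Ht - (d + dH) * HtT = 0) ∧
    (r * 0 - (r1 + d + dT) * 0 = 0) := by
  have hden : 0 < r2 + d + dH := by linarith
  have hdd : 0 < d + dH := by linarith
  have hHt' : 0 < Ht := by
    rw [hHt, sub_pos, div_lt_div_iff₀ hls hden]
    rw [lt_div_iff₀ (by positivity)] at hR
    nlinarith
  refine ⟨⟨by rw [hSt]; positivity, hHt', by rw [hHtT]; positivity⟩, ?_, by simp, by simp,
    ?_, by simp, by simp, by simp, by simp, by simp, by simp, ?_, by simp⟩
  · subst hSt hHt
    field_simp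
    ring
  · subst hSt
    field_simp
    ring
  · rw [hHtT]
    field_simp
    ring
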